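/- Let n≥t≥k≥0 be integers. Then det(D_{n,t,k}) = Π_{i=1}^{k+1} Π_{j=1}^{t−k} Π_{l=1}^{n−t} (i+j+l−1)/(i+j+l−2), where D_{n,t,k} is the (k+1)×(k+1) matrix with entries binom(n−k, t−k+i−j). -/

import Mathlib

open Finset Matrix Polynomial

/-- The matrix `D_{n,t,k}` with `(i,j)`-entry `binom(n-k, t-k+i-j)`
(zero when the lower index is negative or exceeds `n-k`). -/
def Dmat (n t k : ℕ) : Matrix (Fin (k + 1)) (Fin (k + 1)) ℚ :=
  fun i j =>
    if 0 ≤ (t : ℤ) - k + i - j then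
      ((n - k).choose ((t : ℤ) - k + i - j).toNat : ℚ)
    else 0

namespace Stmt6

/-! ### Elementary product lemmas -/

lemma prod_range_cast_sub (v m : ℕ) :
    ∏ s ∈ range m, ((v:ℚ) - s) = (m.factorial : ℚ) * (v.choose m) := by
  induction m with
  | zero => simp
  | succ m ih =>
      rw [Finset.prod_range_succ, ih]
      rcases lt_or_ge v m with h | h
      · rw [Nat.choose_eq_zero_of_lt h, Nat.choose_eq_zero_of_lt (by omega)]
        simp
      · have hcast : ((v - m : ℕ) : ℚ) = (v : ℚ) - m := by
          push_cast [h]; ring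
        have key : (v.choose (m+1) : ℚ) * (m+1) = (v.choose m) * ((v:ℚ) - m) := by
          rw [← hcast]
          exact_mod_cast congrArg (Nat.cast : ℕ → ℚ) (Nat.choose_succ_right_eq v m)
        have hfac : ((m+1).factorial : ℚ) = (m.factorial) * (m+1) := by
          push_cast [Nat.factorial_succ]; ring
        rw [hfac]
        nlinarith [key]

lemma prod_Icc_cast_add (w m : ℕ) :
    ∏ r ∈ Icc 1 m, ((w:ℚ) + r) = ((w+m).factorial : ℚ) / (w.factorial : ℚ) := by
  induction m with
  | zero => simp [div_self (by positivity : ((w.factorial : ℚ)) ≠ 0)]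
  | succ m ih =>
      rw [Finset.prod_Icc_succ_top (by omega), ih]
      have h1 : (w.factorial : ℚ) ≠ 0 := by positivity
      have h2 : ((w + (m+1)).factorial : ℚ) = ((w+m).factorial : ℚ) * ((w:ℚ) + (m+1)) := by
        have h3 : w + (m+1) = (w+m) + 1 := by ring
        rw [h3, Nat.factorial_succ]
        push_cast; ring
      rw [h2]; field_simp; push_cast; ring

lemma prod_range_shift (w i : ℕ) :
    ∏ s ∈ range i, ((w:ℚ) + 1 + s) = ((w+i).factorial : ℚ) / (w.factorial : ℚ) := by
  induction i with
  | zero => simp [div_self (by positivity : ((w.factorial : ℚ)) ≠ 0)]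
  | succ i ih =>
      rw [Finset.prod_range_succ, ih]
      have h1 : (w.factorial : ℚ) ≠ 0 := by positivity
      have h2 : ((w + (i+1)).factorial : ℚ) = ((w+i).factorial : ℚ) * ((w:ℚ) + 1 + i) := by
        have h3 : w + (i+1) = (w+i) + 1 := by ring
        rw [h3, Nat.factorial_succ]
        push_cast; ring
      rw [h2]; field_simp

lemma prod_Ioc_sub_factorial (i k : ℕ) (hik : i ≤ k) :
    ∏ r ∈ Ioc i k, (r - i) = (k - i).factorial := by
  induction k with
  | zero =>
      have : i = 0 := by omega
      subst this; simp
  | succ k ihk =>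
      rcases Nat.lt_or_ge i (k+1) with h | h
      · have hik' : i ≤ k := by omega
        rw [Finset.prod_Ioc_succ_top (by omega), ihk hik']
        have : k + 1 - i = (k - i) + 1 := by omega
        rw [this, Nat.factorial_succ]
        ring
      · have : i = k + 1 := by omega
        subst this; simp

lemma telescope_Icc (b : ℕ) (y : ℚ) (hy : 0 < y) :
    ∏ l ∈ Icc 1 b, (y + l) / (y + l - 1) = (y + b) / y := by
  induction b with
  | zero => simp [div_self (ne_of_gt hy)]
  | succ b ih =>
      rw [Finset.prod_Icc_succ_top (by omega), ih]
      have h1 : y ≠ 0 := ne_of_gt hy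
      have h2 : y + (b+1) - 1 ≠ 0 := by push_cast; nlinarith
      have h3 : y + b ≠ 0 := ne_of_gt (by have : (0:ℚ) ≤ b := by positivity
                                          linarith)
      push_cast
      rw [show y + ((b:ℚ)+1) - 1 = y + b by ring]
      field_simp

/-! ### The binomial polynomial -/

noncomputable def bpoly (m : ℤ) : Polynomial ℚ :=
  if 0 ≤ m then Polynomial.C ((m.toNat.factorial : ℚ)⁻¹) * ∏ s ∈ range m.toNat, (X - C (s:ℚ))
  else 0

lemma bpoly_eval_nat (m : ℤ) (v : ℕ) :
    (bpoly m).eval (v : ℚ) = if 0 ≤ m then (v.choose m.toNat : ℚ) else 0 := by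
  unfold bpoly
  split
  · simp only [eval_mul, eval_C, eval_prod, eval_sub, eval_X]
    rw [prod_range_cast_sub]
    have : (m.toNat.factorial : ℚ) ≠ 0 := by positivity
    field_simp
  · simp

/-! ### Vandermonde swap -/

lemma det_eval_vdm_swap (c : ℕ) (p : Fin c → Polynomial ℚ) (hdeg : ∀ j, (p j).natDegree < c)
    (u v : Fin c → ℚ) :
    Matrix.det (Matrix.of fun i j => (p j).eval (u i)) * (Matrix.vandermonde v).det
      = Matrix.det (Matrix.of fun i j => (p j).eval (v i)) * (Matrix.vandermonde u).det := by
  have key : ∀ w : Fin c → ℚ,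
      (Matrix.of fun i j => (p j).eval (w i)) =
        (Matrix.vandermonde w) * (Matrix.of fun (m j : Fin c) => (p j).coeff m) := by
    intro w
    ext i j
    simp only [Matrix.mul_apply, Matrix.of_apply, Matrix.vandermonde]
    rw [Polynomial.eval_eq_sum_range' (hdeg j)]
    rw [Finset.sum_range fun m => (p j).coeff m * (w i)^m]
    simp [mul_comm, Matrix.of_apply]
  rw [key u, key v, Matrix.det_mul, Matrix.det_mul]
  ring

/-! ### Core choose identity -/

lemma choose_core (X u : ℕ) (huX : u ≤ X) :
    ∀ j, j ≤ u →
    (X.choose (u - j) : ℚ) * ∏ r ∈ Ioc 0 j, ((X:ℚ) - u + r)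
      = (X.choose u : ℚ) * ∏ s ∈ range j, ((u:ℚ) - s) := by
  intro j
  induction j with
  | zero => simp
  | succ j ih =>
      intro hj
      have hj' : j ≤ u := by omega
      rw [Finset.prod_Ioc_succ_top (by omega), Finset.prod_range_succ]
      have key : (X.choose (u-(j+1)) : ℚ) * ((X:ℚ) - u + (j+1))
          = (X.choose (u-j) : ℚ) * ((u:ℚ) - j) := by
        have hnat := Nat.choose_succ_right_eq X (u - (j+1))
        have e2 : u - (j+1) + 1 = u - j := by omega
        rw [e2] at hnat
        have := congrArg (Nat.cast : ℕ → ℚ) hnat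
        push_cast at this
        have ecast1 : ((u - j : ℕ) : ℚ) = (u:ℚ) - j := by
          rw [Nat.cast_sub hj']
        have ecast2 : ((X - (u - (j+1)) : ℕ) : ℚ) = (X:ℚ) - u + (j+1) := by
          rw [Nat.cast_sub (by omega), Nat.cast_sub (by omega)]
          push_cast; ring
        rw [ecast1, ecast2] at this
        linarith [this]
      have ihh := ih hj'
      push_cast
      linear_combination (∏ r ∈ Ioc 0 j, ((X:ℚ) - u + r)) * key + ((u:ℚ) - j) * ihh

/-! ### Entry factorization -/

lemma entry_factor (k X u j : ℕ) (hjk : j ≤ k) (hX : u + k + 1 ≤ X) :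
    (if 0 ≤ (u:ℤ) - j then ((X.choose ((u:ℤ) - j).toNat) : ℚ) else 0)
      = ((X.choose u : ℚ) / ∏ r ∈ Ioc 0 k, ((X:ℚ) - u + r))
        * ((∏ s ∈ range j, ((u:ℚ) - s)) * (∏ r ∈ Ioc j k, ((X:ℚ) - u + r))) := by
  have hpos : ∀ r ∈ Ioc 0 k, (0:ℚ) < (X:ℚ) - u + r := by
    intro r hr
    have h1 : (u:ℚ) + 1 ≤ (X:ℚ) := by exact_mod_cast (by omega : u + 1 ≤ X)
    have h2 : (0:ℚ) ≤ (r:ℚ) := by positivity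
    linarith
  have hD : (∏ r ∈ Ioc 0 k, ((X:ℚ) - u + r)) ≠ 0 := by
    apply Finset.prod_ne_zero_iff.mpr
    intro r hr; exact ne_of_gt (hpos r hr)
  rcases le_or_gt j u with hju | hju
  · -- j ≤ u
    have hcond : (0:ℤ) ≤ (u:ℤ) - j := by omega
    rw [if_pos hcond]
    have htn : ((u:ℤ) - j).toNat = u - j := by omega
    rw [htn]
    have hsplit : (∏ r ∈ Ioc 0 j, ((X:ℚ) - u + r)) * (∏ r ∈ Ioc j k, ((X:ℚ) - u + r))
        = ∏ r ∈ Ioc 0 k, ((X:ℚ) - u + r) :=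
      Finset.prod_Ioc_consecutive _ (by omega) hjk
    have hD2 : (∏ r ∈ Ioc j k, ((X:ℚ) - u + r)) ≠ 0 := by
      apply Finset.prod_ne_zero_iff.mpr
      intro r hr
      rw [Finset.mem_Ioc] at hr
      exact ne_of_gt (hpos r (Finset.mem_Ioc.mpr ⟨by omega, hr.2⟩))
    have core := choose_core X u (by omega) j hju
    rw [div_mul_eq_mul_div, eq_div_iff hD, ← hsplit]
    linear_combination (∏ r ∈ Ioc j k, ((X:ℚ) - u + r)) * core
  · -- j > u : both sides zero
    have hcond : ¬ (0:ℤ) ≤ (u:ℤ) - j := by omega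
    rw [if_neg hcond]
    have hz : (∏ s ∈ range j, ((u:ℚ) - s)) = 0 := by
      apply Finset.prod_eq_zero (Finset.mem_range.mpr hju)
      simp
    rw [hz]
    ring

lemma diagA (X i : ℕ) : ∏ s ∈ range i, ((X:ℚ) + i - s) = ((X+i).factorial : ℚ)/(X.factorial : ℚ) := by
  have h := Finset.prod_range_reflect (fun s => (X:ℚ) + 1 + s) i
  rw [← prod_range_shift X i, ← h]
  apply Finset.prod_congr rfl
  intro s hs
  rw [Finset.mem_range] at hs
  have : ((i - 1 - s : ℕ) : ℚ) = (i:ℚ) - 1 - s := by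
    rw [Nat.cast_sub (by omega), Nat.cast_sub (by omega)]
    simp
  rw [this]; ring

lemma diagB (X i k : ℕ) (hik : i ≤ k) :
    ∏ r ∈ Ioc i k, ((X:ℚ) + r - ((X:ℚ) + i)) = ((k-i).factorial : ℚ) := by
  rw [← prod_Ioc_sub_factorial i k hik]
  push_cast
  apply Finset.prod_congr rfl
  intro r hr
  rw [Finset.mem_Ioc] at hr
  rw [Nat.cast_sub (by omega)]
  ring

lemma L_eval (a k X i : ℕ) (hik : i ≤ k) (hX : a + 2*k + 2 ≤ X) :
    ((X.choose (a+i) : ℚ) / ∏ r ∈ Ioc 0 k, ((X:ℚ) - (a+i) + r))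
      * ((((X+i).factorial : ℚ) / (X.factorial : ℚ)) * ((k-i).factorial : ℚ))
    = (((X+i).factorial : ℚ) / ((a+i).factorial : ℚ))
      * (((k-i).factorial : ℚ) / (((X-a) + (k-i)).factorial : ℚ)) := by
  have hc : (X.choose (a+i) : ℚ) = (X.factorial : ℚ) / (((a+i).factorial : ℚ) * ((X-(a+i)).factorial : ℚ)) :=
    Nat.cast_choose ℚ (by omega)
  have hprod : ∏ r ∈ Ioc 0 k, ((X:ℚ) - (a+i) + r)
      = (((X-a-i)+k).factorial : ℚ) / ((X-a-i).factorial : ℚ) := by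
    rw [← Finset.Icc_add_one_left_eq_Ioc, ← prod_Icc_cast_add (X-a-i) k]
    apply Finset.prod_congr rfl
    intro r _
    have hcx : ((X - a - i : ℕ):ℚ) = (X:ℚ) - a - i := by
      rw [Nat.cast_sub (by omega), Nat.cast_sub (by omega)]
    rw [hcx]; ring
  rw [hc, hprod]
  have e1 : X - (a+i) = X - a - i := by omega
  have e2 : X - a - i + k = (X-a) + (k-i) := by omega
  rw [e1, e2]
  have n1 : ((a+i).factorial : ℚ) ≠ 0 := by positivity
  have n2 : ((X-a-i).factorial : ℚ) ≠ 0 := by positivity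
  have n3 : (((X-a)+(k-i)).factorial : ℚ) ≠ 0 := by positivity
  have n4 : (X.factorial : ℚ) ≠ 0 := by positivity
  field_simp

lemma R_eval (a k X i : ℕ) (hX : a + 2*k + 2 ≤ X) :
    ∏ m ∈ Icc 1 a, (((X:ℚ) + i + m - a) / ((i:ℚ) + m))
    = (((X+i).factorial : ℚ) / ((a+i).factorial : ℚ))
      * ((i.factorial : ℚ) / (((X-a) + i).factorial : ℚ)) := by
  rw [Finset.prod_div_distrib]
  have h1 : ∏ m ∈ Icc 1 a, ((X:ℚ) + i + m - a) = (((X-a+i)+a).factorial : ℚ) / ((X-a+i).factorial : ℚ) := by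
    rw [← prod_Icc_cast_add (X-a+i) a]
    apply Finset.prod_congr rfl
    intro m _
    have hcx : ((X - a + i : ℕ):ℚ) = (X:ℚ) - a + i := by
      push_cast [Nat.cast_sub (show a ≤ X by omega)]; ring
    rw [hcx]; ring
  have h2 : ∏ m ∈ Icc 1 a, ((i:ℚ) + m) = ((i+a).factorial : ℚ) / (i.factorial : ℚ) :=
    prod_Icc_cast_add i a
  rw [h1, h2]
  have e1 : X - a + i + a = X + i := by omega
  have e2 : i + a = a + i := by omega
  rw [e1, e2]
  have n1 : ((a+i).factorial : ℚ) ≠ 0 := by positivity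
  have n2 : ((X-a+i).factorial : ℚ) ≠ 0 := by positivity
  have n3 : (i.factorial : ℚ) ≠ 0 := by positivity
  field_simp

end Stmt6

namespace Stmt6

noncomputable def pfam (k : ℕ) (x : ℚ) (j : ℕ) : Polynomial ℚ :=
  (∏ s ∈ range j, (X - C (s:ℚ))) * (∏ r ∈ Ioc j k, (C (x + r) - X))

lemma pfam_eval (k : ℕ) (x : ℚ) (j : ℕ) (u : ℚ) :
    (pfam k x j).eval u = (∏ s ∈ range j, (u - s)) * ∏ r ∈ Ioc j k, (x + r - u) := by
  simp [pfam, eval_prod]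

lemma pfam_natDegree_lt (k : ℕ) (x : ℚ) (j : ℕ) (hj : j ≤ k) :
    (pfam k x j).natDegree < k + 1 := by
  unfold pfam
  refine lt_of_le_of_lt (natDegree_mul_le) ?_
  have h1 : (∏ s ∈ range j, (X - C (s:ℚ))).natDegree ≤ j := by
    refine le_trans (Polynomial.natDegree_prod_le _ _) ?_
    have : ∀ s ∈ range j, (X - C (s:ℚ)).natDegree ≤ 1 := fun s _ => le_of_eq (natDegree_X_sub_C _)
    have h := Finset.sum_le_sum (s := range j)
      (f := fun s => (X - C (s:ℚ)).natDegree) (g := fun _ => 1) this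
    simpa using h
  have h2 : (∏ r ∈ Ioc j k, (C (x + r) - X)).natDegree ≤ k - j := by
    refine le_trans (Polynomial.natDegree_prod_le _ _) ?_
    have : ∀ r ∈ Ioc j k, (C (x + (r:ℚ)) - X).natDegree ≤ 1 := by
      intro r _
      have : (C (x + (r:ℚ)) - X) = -(X - C (x + (r:ℚ))) := by ring
      rw [this, natDegree_neg, natDegree_X_sub_C]
    have h := Finset.sum_le_sum (s := Ioc j k)
      (f := fun r => (C (x + (r:ℚ)) - X).natDegree) (g := fun _ => 1) this
    simp only [Finset.sum_const, smul_eq_mul, mul_one] at h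
    rw [Nat.card_Ioc] at h
    exact h
  omega

lemma detP_eval (a k X : ℕ) (hX : a + 2*k + 2 ≤ X) :
    (Matrix.det (Matrix.of fun i j : Fin (k+1) => bpoly ((a:ℤ) + (i:ℕ) - (j:ℕ)))).eval ((X:ℕ):ℚ)
      = ∏ i ∈ range (k+1), ∏ m ∈ Icc 1 a, (((X:ℚ) + i + m - a) / ((i:ℚ) + m)) := by
  classical
  set M : Matrix (Fin (k+1)) (Fin (k+1)) (Polynomial ℚ) :=
    Matrix.of fun i j : Fin (k+1) => bpoly ((a:ℤ) + (i:ℕ) - (j:ℕ)) with hMdef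
  -- Step 1: evaluate the determinant entrywise
  have h1 : (M.det).eval ((X:ℕ):ℚ)
      = Matrix.det (Matrix.of fun i j : Fin (k+1) =>
          (bpoly ((a:ℤ) + (i:ℕ) - (j:ℕ))).eval ((X:ℕ):ℚ)) := by
    have h := RingHom.map_det (Polynomial.evalRingHom ((X:ℕ):ℚ)) M
    simp only [coe_evalRingHom] at h
    rw [h]
    rfl
  rw [h1]
  -- Step 2: entry factorization
  set F : ℕ → ℚ := fun i => (X.choose (a+i) : ℚ) / ∏ r ∈ Ioc 0 k, ((X:ℚ) - (a+i) + r) with hF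
  have h2 : (Matrix.of fun i j : Fin (k+1) =>
        (bpoly ((a:ℤ) + (i:ℕ) - (j:ℕ))).eval ((X:ℕ):ℚ))
      = Matrix.of (fun i j : Fin (k+1) => F (i:ℕ) * (pfam k (X:ℚ) (j:ℕ)).eval (((a:ℕ):ℚ) + (i:ℕ))) := by
    ext i j
    simp only [Matrix.of_apply]
    have e0 : (a:ℤ) + (i:ℕ) - (j:ℕ) = (((a + (i:ℕ) : ℕ)):ℤ) - (j:ℕ) := by push_cast; ring
    rw [e0, bpoly_eval_nat]
    have hjk : (j:ℕ) ≤ k := by omega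
    have := entry_factor k X (a + (i:ℕ)) (j:ℕ) hjk (by omega)
    rw [this, pfam_eval]
    have ecast : (((a + (i:ℕ) : ℕ)):ℚ) = ((a:ℕ):ℚ) + ((i:ℕ):ℚ) := by push_cast; ring
    rw [hF]
    simp only []
    rw [ecast]
    congr 1
    congr 1
    apply Finset.prod_congr rfl
    intro r _
    ring
  rw [h2]
  -- Step 3: pull out row factors
  have h3 : Matrix.det (Matrix.of (fun i j : Fin (k+1) =>
        F (i:ℕ) * (pfam k (X:ℚ) (j:ℕ)).eval (((a:ℕ):ℚ) + (i:ℕ))))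
      = (∏ i : Fin (k+1), F (i:ℕ)) *
        Matrix.det (Matrix.of (fun i j : Fin (k+1) => (pfam k (X:ℚ) (j:ℕ)).eval (((a:ℕ):ℚ) + (i:ℕ)))) :=
    Matrix.det_mul_column _ _
  rw [h3]
  -- Step 4: Vandermonde swap
  set p : Fin (k+1) → Polynomial ℚ := fun j => pfam k (X:ℚ) (j:ℕ) with hp
  set ufun : Fin (k+1) → ℚ := fun i => ((a:ℕ):ℚ) + (i:ℕ) with hu
  set vfun : Fin (k+1) → ℚ := fun i => ((X:ℕ):ℚ) + (i:ℕ) with hv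
  have hdeg : ∀ j : Fin (k+1), (p j).natDegree < k+1 := by
    intro j; exact pfam_natDegree_lt k _ (j:ℕ) (by omega)
  have hswap := det_eval_vdm_swap (k+1) p hdeg ufun vfun
  have hVdmEq : (Matrix.vandermonde ufun).det = (Matrix.vandermonde vfun).det := by
    rw [Matrix.det_vandermonde, Matrix.det_vandermonde]
    apply Finset.prod_congr rfl; intro i _
    apply Finset.prod_congr rfl; intro j _
    simp only [hu, hv]; ring
  have hVdmNe : (Matrix.vandermonde vfun).det ≠ 0 := by
    rw [Matrix.det_vandermonde]
    apply Finset.prod_ne_zero_iff.mpr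
    intro i _
    apply Finset.prod_ne_zero_iff.mpr
    intro j hj
    rw [Finset.mem_Ioi] at hj
    have : ((i:ℕ):ℚ) < ((j:ℕ):ℚ) := by exact_mod_cast (Fin.lt_iff_val_lt_val.mp hj)
    simp only [hv]
    intro hcontra
    nlinarith
  have h4 : Matrix.det (Matrix.of fun i j => (p j).eval (ufun i))
      = Matrix.det (Matrix.of fun i j => (p j).eval (vfun i)) := by
    rw [hVdmEq] at hswap
    exact mul_right_cancel₀ hVdmNe hswap
  rw [show (Matrix.of (fun i j : Fin (k+1) => (pfam k (X:ℚ) (j:ℕ)).eval (((a:ℕ):ℚ) + (i:ℕ))))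
      = Matrix.of fun i j => (p j).eval (ufun i) from rfl, h4]
  -- Step 5: triangular determinant
  have htri : (Matrix.of fun i j : Fin (k+1) => (p j).eval (vfun i)).BlockTriangular id := by
    intro i j hij
    simp only [Matrix.of_apply, hp, hv, pfam_eval, id] at *
    apply mul_eq_zero_of_right
    apply Finset.prod_eq_zero (i := (i:ℕ))
    · rw [Finset.mem_Ioc]
      exact ⟨Fin.lt_iff_val_lt_val.mp hij, by omega⟩
    · ring
  rw [Matrix.det_of_upperTriangular htri]
  -- Step 6: compute diagonal and finish
  have hdiag : ∀ i : Fin (k+1),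
      (Matrix.of fun i j : Fin (k+1) => (p j).eval (vfun i)) i i
        = (((X+(i:ℕ)).factorial : ℚ)/(X.factorial : ℚ)) * ((k-(i:ℕ)).factorial : ℚ) := by
    intro i
    simp only [Matrix.of_apply, hp, hv, pfam_eval]
    rw [show (∏ s ∈ range (i:ℕ), (((X:ℕ):ℚ) + (i:ℕ) - s)) = ((X+(i:ℕ)).factorial : ℚ)/(X.factorial : ℚ)
        from diagA X (i:ℕ)]
    rw [show (∏ r ∈ Ioc (i:ℕ) k, (((X:ℕ):ℚ) + r - (((X:ℕ):ℚ) + (i:ℕ)))) = ((k-(i:ℕ)).factorial : ℚ)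
        from diagB X (i:ℕ) k (by omega)]
  rw [Finset.prod_congr rfl (fun i _ => hdiag i)]
  -- now pure product algebra
  rw [Fin.prod_univ_eq_prod_range (fun i => F i) (k+1),
      Fin.prod_univ_eq_prod_range
        (fun i => (((X+i).factorial : ℚ)/(X.factorial : ℚ)) * ((k-i).factorial : ℚ)) (k+1)]
  rw [← Finset.prod_mul_distrib]
  have hL : ∀ i ∈ range (k+1),
      F i * ((((X+i).factorial : ℚ)/(X.factorial : ℚ)) * ((k-i).factorial : ℚ))
        = ((((X+i).factorial : ℚ) / ((a+i).factorial : ℚ))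
            * (((k-i).factorial : ℚ) / (((X-a) + (k-i)).factorial : ℚ))) := by
    intro i hi
    rw [Finset.mem_range] at hi
    exact L_eval a k X i (by omega) hX
  rw [Finset.prod_congr rfl hL]
  have hR : ∀ i ∈ range (k+1),
      ∏ m ∈ Icc 1 a, (((X:ℚ) + i + m - a) / ((i:ℚ) + m))
        = ((((X+i).factorial : ℚ) / ((a+i).factorial : ℚ))
            * ((i.factorial : ℚ) / (((X-a) + i).factorial : ℚ))) := by
    intro i _
    exact R_eval a k X i hX
  rw [Finset.prod_congr rfl hR]
  rw [Finset.prod_mul_distrib, Finset.prod_mul_distrib]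
  congr 1
  have hreflect := Finset.prod_range_reflect (fun i => ((i.factorial : ℚ) / (((X-a) + i).factorial : ℚ))) (k+1)
  rw [← hreflect]
  apply Finset.prod_congr rfl
  intro i hi
  rw [Finset.mem_range] at hi
  have : k + 1 - 1 - i = k - i := by omega
  rw [this]

end Stmt6

namespace Stmt6

noncomputable def Qpoly (a k : ℕ) : Polynomial ℚ :=
  ∏ i ∈ range (k+1), ∏ m ∈ Icc 1 a,
    (Polynomial.C (((i:ℚ)+m)⁻¹) * (Polynomial.X + Polynomial.C ((i:ℚ) + m - a)))

lemma Qpoly_eval (a k : ℕ) (x : ℚ) :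
    (Qpoly a k).eval x = ∏ i ∈ range (k+1), ∏ m ∈ Icc 1 a, ((x + i + m - a) / ((i:ℚ) + m)) := by
  simp only [Qpoly, eval_prod, eval_mul, eval_C, eval_add, eval_X]
  apply Finset.prod_congr rfl; intro i _
  apply Finset.prod_congr rfl; intro m _
  rw [div_eq_inv_mul]
  ring

lemma P_eq_Q (a k : ℕ) :
    Matrix.det (Matrix.of fun i j : Fin (k+1) => bpoly ((a:ℤ) + (i:ℕ) - (j:ℕ))) = Qpoly a k := by
  apply Polynomial.eq_of_infinite_eval_eq
  have hsub : (fun (m:ℕ) => ((m:ℚ))) '' (Set.Ici (a+2*k+2)) ⊆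
      {x | Polynomial.eval x (Matrix.det (Matrix.of fun i j : Fin (k+1) =>
          bpoly ((a:ℤ) + (i:ℕ) - (j:ℕ)))) = Polynomial.eval x (Qpoly a k)} := by
    rintro x ⟨m, hm, rfl⟩
    simp only [Set.mem_setOf_eq]
    rw [Qpoly_eval]
    exact detP_eval a k m (Set.mem_Ici.mp hm)
  refine Set.Infinite.mono hsub ?_
  apply Set.Infinite.image
  · intro x _ y _ h
    exact Nat.cast_injective h
  · exact Set.Ici_infinite _

end Stmt6

/-- Krattenthaler's formula:
`det D_{n,t,k} = Π_{i=1}^{k+1} Π_{j=1}^{t-k} Π_{l=1}^{n-t} (i+j+l-1)/(i+j+l-2)`. -/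
theorem stmt6 (n t k : ℕ) (htk : k ≤ t) (hnt : t ≤ n) :
    (Dmat n t k).det =
      ∏ i ∈ Finset.Icc 1 (k + 1), ∏ j ∈ Finset.Icc 1 (t - k), ∏ l ∈ Finset.Icc 1 (n - t),
        ((i : ℚ) + j + l - 1) / ((i : ℚ) + j + l - 2) := by
  open Finset Stmt6 Polynomial in
  set a := t - k with ha
  set b := n - t with hb
  set N := n - k with hN
  -- Step 1: identify `Dmat` with the evaluated polynomial matrix
  have hD : Dmat n t k = Matrix.of (fun i j : Fin (k+1) =>
      (bpoly ((a:ℤ) + (i:ℕ) - (j:ℕ))).eval ((N:ℕ):ℚ)) := by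
    ext i j
    rw [Matrix.of_apply, bpoly_eval_nat]
    have e : (t:ℤ) - k + (i:ℕ) - (j:ℕ) = (a:ℤ) + (i:ℕ) - (j:ℕ) := by omega
    show (if 0 ≤ (t : ℤ) - k + i - j then (((n - k).choose (((t : ℤ) - k + i - j).toNat) : ℕ) : ℚ)
      else 0) = _
    rw [e]
  have hdet : (Dmat n t k).det
      = (Matrix.det (Matrix.of fun i j : Fin (k+1) => bpoly ((a:ℤ) + (i:ℕ) - (j:ℕ)))).eval ((N:ℕ):ℚ) := by
    rw [hD]
    have h := RingHom.map_det (Polynomial.evalRingHom ((N:ℕ):ℚ))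
      (Matrix.of fun i j : Fin (k+1) => bpoly ((a:ℤ) + (i:ℕ) - (j:ℕ)))
    simp only [coe_evalRingHom] at h
    rw [h]
    rfl
  rw [hdet, P_eq_Q, Qpoly_eval]
  -- Step 2: telescope the right-hand side
  have hNa : ((N:ℕ):ℚ) - a = (b:ℚ) := by
    have h1 : a ≤ N := by omega
    have h2 : N - a = b := by omega
    rw [← h2, Nat.cast_sub h1]
  have htel : ∀ i ∈ Icc 1 (k+1), ∀ j ∈ Icc 1 a,
      ∏ l ∈ Icc 1 b, (((i:ℕ):ℚ) + j + l - 1) / (((i:ℕ):ℚ) + j + l - 2)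
        = (((i:ℕ):ℚ) + j - 1 + b) / (((i:ℕ):ℚ) + j - 1) := by
    intro i hi j hj
    rw [Finset.mem_Icc] at hi hj
    have hy : (0:ℚ) < ((i:ℕ):ℚ) + j - 1 := by
      have h1 : (1:ℚ) ≤ ((i:ℕ):ℚ) := by exact_mod_cast hi.1
      have h2 : (1:ℚ) ≤ ((j:ℕ):ℚ) := by exact_mod_cast hj.1
      linarith
    have h := telescope_Icc b (((i:ℕ):ℚ) + j - 1) hy
    rw [← h]
    apply Finset.prod_congr rfl
    intro l _
    have e1 : ((i:ℕ):ℚ) + j + l - 1 = ((i:ℕ):ℚ) + j - 1 + l := by ring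
    have e2 : ((i:ℕ):ℚ) + j + l - 2 = ((i:ℕ):ℚ) + j - 1 + l - 1 := by ring
    rw [e1, e2]
  rw [Finset.prod_congr rfl (fun i hi => Finset.prod_congr rfl (fun j hj => htel i hi j hj))]
  -- Step 3: reindex the outer product
  rw [show Icc 1 (k+1) = Ico 1 (k+2) from (Finset.Ico_add_one_right_eq_Icc 1 (k+1)).symm]
  rw [Finset.prod_Ico_eq_prod_range]
  have hrange : k + 2 - 1 = k + 1 := by omega
  rw [hrange]
  apply Finset.prod_congr rfl
  intro i _
  apply Finset.prod_congr rfl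
  intro m _
  have e1 : (((1 + i : ℕ)):ℚ) = 1 + (i:ℚ) := by push_cast; ring
  rw [e1]
  have e2 : ((N:ℕ):ℚ) + i + m - a = (1 + (i:ℚ) + m - 1) + b := by
    rw [← hNa]; ring
  have e3 : (1:ℚ) + (i:ℚ) + m - 1 = (i:ℚ) + m := by ring
  rw [e2, e3]
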